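/- The closure of the cone R_{2d}(ℝ^n) of functionals on ℝ[x]_{2d} representable by finite Borel measures on ℝ^n equals the dual cone P_{2d}(ℝ^n)* of the cone of globally nonnegative polynomials of degree ≤ 2d. -/

import Mathlib

open MeasureTheory

/-- The space of truncated moment sequences: real sequences indexed by monomials
(exponent vectors) of total degree at most `d` in `n` variables; this is the
(coordinatized) dual space `ℝ[x]_d^*`. -/
abbrev MomSpace (n d : ℕ) := {α : Fin n →₀ ℕ // (α.sum fun _ e => e) ≤ d} → ℝ

/-- Evaluation of the monomial `x^α` at the point `v`. -/
def evalMono {n : ℕ} (v : Fin n → ℝ) (α : Fin n →₀ ℕ) : ℝ :=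
  α.prod fun i k => v i ^ k

/-- The point-evaluation functional `ℓ_v` on `ℝ[x]_d`, in moment coordinates. -/
def Lmap (n d : ℕ) (v : Fin n → ℝ) : MomSpace n d := fun α => evalMono v α.1

/-- The pairing `⟨p, y⟩` between a polynomial `p` (of degree ≤ d) and a moment
sequence `y`; it equals `ℓ(p)` for the functional `ℓ` with moments `y`. -/
noncomputable def momPair {n d : ℕ} (y : MomSpace n d)
    (p : MvPolynomial (Fin n) ℝ) : ℝ :=
  ∑ α ∈ p.support, p.coeff α *
    (if h : (α.sum fun _ e => e) ≤ d then y ⟨α, h⟩ else 0)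

/-- The conical hull of a set: all finite nonnegative combinations. -/
def conicalHull {V : Type*} [AddCommMonoid V] [Module ℝ V] (s : Set V) : Set V :=
  {y | ∃ (k : ℕ) (c : Fin k → ℝ) (z : Fin k → V),
    (∀ i, 0 ≤ c i) ∧ (∀ i, z i ∈ s) ∧ y = ∑ i, c i • z i}

/-- The cone `R_{2d}(K)` of moment sequences representable by a finite Borel
measure supported on `K`. -/
def RepCone (n d : ℕ) (K : Set (Fin n → ℝ)) : Set (MomSpace n d) :=
  {y | ∃ σ : Measure (Fin n → ℝ), IsFiniteMeasure σ ∧ σ Kᶜ = 0 ∧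
    ∀ α : {α : Fin n →₀ ℕ // (α.sum fun _ e => e) ≤ d},
      y α = ∫ v in K, evalMono v α.1 ∂σ}

/-- The cone `R_{2d}(ℝ^n)` of moment sequences of finite Borel measures on `ℝ^n`
(having all moments of degree up to `d`). -/
def RepConeAll (n d : ℕ) : Set (MomSpace n d) :=
  {y | ∃ σ : Measure (Fin n → ℝ), IsFiniteMeasure σ ∧
    ∀ α : {α : Fin n →₀ ℕ // (α.sum fun _ e => e) ≤ d},
      Integrable (fun v => evalMono v α.1) σ ∧ y α = ∫ v, evalMono v α.1 ∂σ}

section Aux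

noncomputable instance momFintype {n d : ℕ} :
    Fintype {α : Fin n →₀ ℕ // (α.sum fun _ e => e) ≤ d} := by
  haveI : Finite {α : Fin n →₀ ℕ // (α.sum fun _ e => e) ≤ d} :=
    (Finsupp.finite_of_degree_le (σ := Fin n) d).to_subtype
  exact Fintype.ofFinite _

variable {n d : ℕ}

lemma sum_support_eq (p : MvPolynomial (Fin n) ℝ) (hp : p.totalDegree ≤ d)
    (g : (Fin n →₀ ℕ) → ℝ) :
    ∑ β ∈ p.support, p.coeff β * g β
      = ∑ α : {α : Fin n →₀ ℕ // (α.sum fun _ e => e) ≤ d}, p.coeff α.1 * g α.1 := by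
  classical
  have hval : Function.Injective
      (Subtype.val : {α : Fin n →₀ ℕ // (α.sum fun _ e => e) ≤ d} → (Fin n →₀ ℕ)) :=
    Subtype.val_injective
  have himg : ∑ α : {α : Fin n →₀ ℕ // (α.sum fun _ e => e) ≤ d}, p.coeff α.1 * g α.1
      = ∑ β ∈ (Finset.univ.image Subtype.val :
          Finset (Fin n →₀ ℕ)), p.coeff β * g β :=
    (Finset.sum_image (f := fun β => p.coeff β * g β) (g := Subtype.val)
      (fun x _ y _ h => hval h)).symm
  rw [himg]
  apply Finset.sum_subset
  · intro β hβ
    simp only [Finset.mem_image, Finset.mem_univ, true_and]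
    exact ⟨⟨β, (MvPolynomial.le_totalDegree hβ).trans hp⟩, rfl⟩
  · intro β _ hβ
    simp [MvPolynomial.notMem_support_iff.mp hβ]

lemma momPair_eq (y : MomSpace n d) (p : MvPolynomial (Fin n) ℝ)
    (hp : p.totalDegree ≤ d) :
    momPair y p = ∑ α : {α : Fin n →₀ ℕ // (α.sum fun _ e => e) ≤ d},
      p.coeff α.1 * y α := by
  classical
  rw [momPair, sum_support_eq p hp
    (fun β => if h : (β.sum fun _ e => e) ≤ d then y ⟨β, h⟩ else 0)]
  refine Finset.sum_congr rfl fun α _ => ?_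
  rw [dif_pos α.2]

lemma eval_eq_sum (p : MvPolynomial (Fin n) ℝ) (hp : p.totalDegree ≤ d)
    (v : Fin n → ℝ) :
    MvPolynomial.eval v p
      = ∑ α : {α : Fin n →₀ ℕ // (α.sum fun _ e => e) ≤ d},
          p.coeff α.1 * evalMono v α.1 := by
  rw [MvPolynomial.eval_eq, ← sum_support_eq p hp (evalMono v)]
  rfl

/-- The polynomial with coefficients given by a linear functional on `MomSpace`. -/
noncomputable def polyOf (f : MomSpace n d →ₗ[ℝ] ℝ) : MvPolynomial (Fin n) ℝ :=
  ∑ α : {α : Fin n →₀ ℕ // (α.sum fun _ e => e) ≤ d},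
    MvPolynomial.monomial α.1 (f (Pi.single α 1))

lemma apply_eq_sum (f : MomSpace n d →ₗ[ℝ] ℝ) (w : MomSpace n d) :
    f w = ∑ α : {α : Fin n →₀ ℕ // (α.sum fun _ e => e) ≤ d},
      w α * f (Pi.single α 1) := by
  classical
  conv_lhs => rw [← Finset.univ_sum_single w, map_sum]
  refine Finset.sum_congr rfl fun α _ => ?_
  have : Pi.single α (w α) = w α • (Pi.single (M := fun _ => ℝ) α 1) := by
    ext β
    by_cases h : β = α
    · subst h; simp
    · simp [Pi.single_eq_of_ne h]
  rw [this, f.map_smul, smul_eq_mul]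

lemma totalDegree_polyOf (f : MomSpace n d →ₗ[ℝ] ℝ) : (polyOf f).totalDegree ≤ d := by
  refine (MvPolynomial.totalDegree_finset_sum _ _).trans (Finset.sup_le fun α _ => ?_)
  exact (MvPolynomial.totalDegree_monomial_le _ _).trans α.2

lemma coeff_polyOf (f : MomSpace n d →ₗ[ℝ] ℝ)
    (α : {α : Fin n →₀ ℕ // (α.sum fun _ e => e) ≤ d}) :
    (polyOf f).coeff α.1 = f (Pi.single α 1) := by
  classical
  rw [polyOf, MvPolynomial.coeff_sum]
  rw [Finset.sum_eq_single α]
  · rw [MvPolynomial.coeff_monomial, if_pos rfl]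
  · intro b _ hb
    rw [MvPolynomial.coeff_monomial, if_neg (fun h => hb (Subtype.ext h))]
  · intro h; exact absurd (Finset.mem_univ α) h

lemma eval_polyOf (f : MomSpace n d →ₗ[ℝ] ℝ) (v : Fin n → ℝ) :
    MvPolynomial.eval v (polyOf f) = f (Lmap n d v) := by
  rw [polyOf, map_sum, apply_eq_sum f (Lmap n d v)]
  refine Finset.sum_congr rfl fun α _ => ?_
  rw [MvPolynomial.eval_monomial, mul_comm]
  rfl

lemma momPair_polyOf (f : MomSpace n d →ₗ[ℝ] ℝ) (y : MomSpace n d) :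
    momPair y (polyOf f) = f y := by
  rw [momPair_eq y _ (totalDegree_polyOf f), apply_eq_sum f y]
  refine Finset.sum_congr rfl fun α _ => ?_
  rw [coeff_polyOf, mul_comm]

lemma continuous_evalMono (α : Fin n →₀ ℕ) :
    Continuous fun v : Fin n → ℝ => evalMono v α := by
  unfold evalMono Finsupp.prod
  exact continuous_finset_prod _ fun i _ => (continuous_apply i).pow _

lemma convex_conicalHull {V : Type*} [AddCommGroup V] [Module ℝ V] (s : Set V) :
    Convex ℝ (conicalHull s) := by
  rintro x ⟨k, c, z, hc, hz, rfl⟩ y ⟨m, c', z', hc', hz', rfl⟩ a b ha hb _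
  refine ⟨k + m, Fin.append (a • c) (b • c'), Fin.append z z', ?_, ?_, ?_⟩
  · intro i
    refine Fin.addCases (fun i => ?_) (fun i => ?_) i
    · rw [Fin.append_left]; exact mul_nonneg ha (hc i)
    · rw [Fin.append_right]; exact mul_nonneg hb (hc' i)
  · intro i
    refine Fin.addCases (fun i => ?_) (fun i => ?_) i
    · rw [Fin.append_left]; exact hz i
    · rw [Fin.append_right]; exact hz' i
  · rw [Fin.sum_univ_add]
    simp only [Fin.append_left, Fin.append_right, Pi.smul_apply, smul_eq_mul]
    rw [Finset.smul_sum, Finset.smul_sum]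
    simp [smul_smul]

lemma smul_mem_conicalHull {V : Type*} [AddCommGroup V] [Module ℝ V] {s : Set V}
    {t : ℝ} (ht : 0 ≤ t) {y : V} (hy : y ∈ conicalHull s) : t • y ∈ conicalHull s := by
  obtain ⟨k, c, z, hc, hz, rfl⟩ := hy
  refine ⟨k, t • c, z, fun i => mul_nonneg ht (hc i), hz, ?_⟩
  rw [Finset.smul_sum]
  simp [smul_smul]

lemma zero_mem_conicalHull {V : Type*} [AddCommGroup V] [Module ℝ V] (s : Set V) :
    (0 : V) ∈ conicalHull s := by
  exact ⟨0, (fun i => 0), (fun i => 0), fun i => le_rfl, fun i => i.elim0, by simp⟩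

lemma mem_conicalHull_self {V : Type*} [AddCommGroup V] [Module ℝ V] {s : Set V}
    {y : V} (hy : y ∈ s) : y ∈ conicalHull s :=
  ⟨1, fun _ => 1, fun _ => y, fun _ => zero_le_one, fun _ => hy, by simp⟩

lemma integrable_dirac' {f : (Fin n → ℝ) → ℝ} (hf : Continuous f) (x : Fin n → ℝ) :
    MeasureTheory.Integrable f (MeasureTheory.Measure.dirac x) := by
  refine ⟨hf.aestronglyMeasurable, ?_⟩
  rw [MeasureTheory.hasFiniteIntegral_def,
    MeasureTheory.lintegral_dirac]
  exact ENNReal.coe_lt_top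

lemma conicalHull_subset_repCone :
    conicalHull (Set.range (Lmap n d)) ⊆ RepConeAll n d := by
  rintro y ⟨k, c, z, hc, hz, rfl⟩
  choose v hv using fun i => hz i
  refine ⟨∑ i : Fin k, ENNReal.ofReal (c i) • MeasureTheory.Measure.dirac (v i), ?_, ?_⟩
  · constructor
    have : (∑ i : Fin k, ENNReal.ofReal (c i) • MeasureTheory.Measure.dirac (v i))
        Set.univ = ∑ i : Fin k, ENNReal.ofReal (c i) := by
      simp [MeasureTheory.Measure.coe_finset_sum]
    rw [this]
    exact ENNReal.sum_lt_top.2 fun i _ => ENNReal.ofReal_lt_top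
  · intro α
    have hint : ∀ i : Fin k, MeasureTheory.Integrable (fun w => evalMono w α.1)
        (ENNReal.ofReal (c i) • MeasureTheory.Measure.dirac (v i)) := fun i =>
      (integrable_dirac' (continuous_evalMono α.1) (v i)).smul_measure ENNReal.ofReal_ne_top
    refine ⟨MeasureTheory.integrable_finset_sum_measure.2 fun i _ => hint i, ?_⟩
    rw [MeasureTheory.integral_finset_sum_measure (fun i _ => hint i)]
    have : ∀ i : Fin k, ∫ w, evalMono w α.1
        ∂(ENNReal.ofReal (c i) • MeasureTheory.Measure.dirac (v i))
        = c i * evalMono (v i) α.1 := by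
      intro i
      rw [MeasureTheory.integral_smul_measure, MeasureTheory.integral_dirac,
        ENNReal.toReal_ofReal (hc i), smul_eq_mul]
    rw [Finset.sum_congr rfl fun i _ => this i]
    simp only [Finset.sum_apply, Pi.smul_apply, smul_eq_mul]
    refine Finset.sum_congr rfl fun i _ => ?_
    rw [← hv i]
    rfl

end Aux

/-- The closure of the cone of `ℝ^n`-representable moment sequences equals the dual
cone of the cone of globally nonnegative polynomials of degree ≤ 2d. -/
theorem stmt17 {n d : ℕ} :
    closure (RepConeAll n (2 * d)) =
      {y : MomSpace n (2 * d) | ∀ p : MvPolynomial (Fin n) ℝ,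
        p.totalDegree ≤ 2 * d → (∀ x : Fin n → ℝ, 0 ≤ MvPolynomial.eval x p) →
          0 ≤ momPair y p} := by
  apply Set.Subset.antisymm
  · -- closure of the representable cone is contained in the dual cone
    apply closure_minimal
    · rintro y ⟨σ, hfin, hy⟩ p hdeg hpos
      rw [momPair_eq y p hdeg]
      have h1 : ∀ α : {α : Fin n →₀ ℕ // (α.sum fun _ e => e) ≤ 2 * d},
          p.coeff α.1 * y α = ∫ v, p.coeff α.1 * evalMono v α.1 ∂σ := by
        intro α
        rw [(hy α).2, MeasureTheory.integral_const_mul]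
      rw [Finset.sum_congr rfl fun α _ => h1 α,
        ← MeasureTheory.integral_finset_sum _ fun α _ => ((hy α).1.const_mul _)]
      refine MeasureTheory.integral_nonneg fun v => ?_
      rw [← eval_eq_sum p hdeg v]
      exact hpos v
    · -- the dual cone is closed
      have : {y : MomSpace n (2 * d) | ∀ p : MvPolynomial (Fin n) ℝ,
          p.totalDegree ≤ 2 * d → (∀ x : Fin n → ℝ, 0 ≤ MvPolynomial.eval x p) →
            0 ≤ momPair y p}
          = ⋂ p : MvPolynomial (Fin n) ℝ, ⋂ (_ : p.totalDegree ≤ 2 * d),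
              ⋂ (_ : ∀ x : Fin n → ℝ, 0 ≤ MvPolynomial.eval x p),
                {y : MomSpace n (2 * d) | 0 ≤ momPair y p} := by
        ext y; simp [Set.mem_iInter]
      rw [this]
      refine isClosed_iInter fun p => isClosed_iInter fun _ => isClosed_iInter fun _ => ?_
      have hcont : Continuous fun y : MomSpace n (2 * d) => momPair y p := by
        unfold momPair
        refine continuous_finset_sum _ fun β _ => ?_
        by_cases h : (β.sum fun _ e => e) ≤ 2 * d
        · simp only [dif_pos h]
          exact continuous_const.mul (continuous_apply _)
        · simp only [dif_neg h, mul_zero]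
          exact continuous_const
      exact isClosed_le continuous_const hcont
  · -- dual cone ⊆ closure of the representable cone
    intro y hy
    refine closure_mono (conicalHull_subset_repCone (n := n) (d := 2 * d)) ?_
    by_contra hnc
    obtain ⟨f, u, hfa, hfy⟩ := geometric_hahn_banach_closed_point
      ((convex_conicalHull (Set.range (Lmap n (2 * d)))).closure) isClosed_closure hnc
    have hu : 0 < u := by
      have := hfa 0 (subset_closure (zero_mem_conicalHull _))
      simpa using this
    have hfL : ∀ v : Fin n → ℝ, f (Lmap n (2 * d) v) ≤ 0 := by
      intro v
      by_contra hpos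
      push_neg at hpos
      have hmem : ∀ t : ℝ, 0 ≤ t →
          t • Lmap n (2 * d) v ∈ conicalHull (Set.range (Lmap n (2 * d))) := fun t ht =>
        smul_mem_conicalHull ht (mem_conicalHull_self (Set.mem_range_self v))
      have h2 : ((u + 1) / f (Lmap n (2 * d) v)) * f (Lmap n (2 * d) v) < u := by
        have := hfa _ (subset_closure (hmem ((u + 1) / f (Lmap n (2 * d) v))
          (div_nonneg (by linarith) hpos.le)))
        simpa [_root_.map_smul, smul_eq_mul] using this
      rw [div_mul_cancel₀ _ (ne_of_gt hpos)] at h2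
      linarith
    set g : MomSpace n (2 * d) →ₗ[ℝ] ℝ := -(f.toLinearMap) with hg
    have hdeg := totalDegree_polyOf g
    have hev : ∀ x : Fin n → ℝ, 0 ≤ MvPolynomial.eval x (polyOf g) := by
      intro x
      rw [eval_polyOf]
      have : g (Lmap n (2 * d) x) = -(f (Lmap n (2 * d) x)) := rfl
      rw [this]
      linarith [hfL x]
    have hpair := hy (polyOf g) hdeg hev
    rw [momPair_polyOf g y] at hpair
    have : g y = -(f y) := rfl
    rw [this] at hpair
    linarith
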